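/- Let m ∈ ℝ and let u : ℝ → ℝ be given by u(r) = m·(1 − r²/4)⁻¹, and define (Lf)(r) = f''(r) − m·r·(1 − r²/4)⁻¹·f'(r) − m·(m − 1/2)·(1 − r²/4)⁻¹·f(r). Then (L(Lu))(0) = (1/4)·m·(m−1)·(4m³ − 5m − 6). -/

import Mathlib

/-- The Yamabe-type operator `L` of `dr² + h_r` on the round sphere `S^{2m}`, acting on
functions of `r` alone:
`(Lf)(r) = f''(r) − m·r·(1 − r²/4)⁻¹·f'(r) − m·(m − 1/2)·(1 − r²/4)⁻¹·f(r)`. -/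
noncomputable def Lop (m : ℝ) (f : ℝ → ℝ) : ℝ → ℝ := fun r =>
  deriv (deriv f) r - m * r * (1 - r ^ 2 / 4)⁻¹ * deriv f r
    - m * (m - 1 / 2) * (1 - r ^ 2 / 4)⁻¹ * f r

open Set Filter

noncomputable def qf (r : ℝ) : ℝ := (1 - r ^ 2 / 4)⁻¹

lemma ht {r : ℝ} (hr : r ∈ Set.Ioo (-2:ℝ) 2) : (1 - r ^ 2 / 4) ≠ 0 := by
  obtain ⟨h1, h2⟩ := hr; nlinarith

lemma hq {r : ℝ} (h : (1 - r ^ 2 / 4) ≠ 0) :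
    HasDerivAt qf (r / 2 * qf r ^ 2) r := by
  have h1 : HasDerivAt (fun x : ℝ => 1 - x ^ 2 / 4) (-(r / 2)) r := by
    have := ((hasDerivAt_pow 2 r).div_const 4).const_sub 1
    refine this.congr_deriv ?_
    push_cast; ring
  have h2 := h1.inv h
  refine h2.congr_deriv ?_
  simp only [qf]
  field_simp

noncomputable def u1 (m r : ℝ) : ℝ := m / 2 * r * qf r ^ 2
noncomputable def u2 (m r : ℝ) : ℝ := m / 2 * qf r ^ 2 + m / 2 * r ^ 2 * qf r ^ 3
noncomputable def vA (m : ℝ) : ℝ := m / 2 + m ^ 2 / 2 - m ^ 3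
noncomputable def vB (m : ℝ) : ℝ := (m - m ^ 2) / 2
noncomputable def vf (m r : ℝ) : ℝ := vA m * qf r ^ 2 + vB m * r ^ 2 * qf r ^ 3
noncomputable def v1 (m r : ℝ) : ℝ :=
  (vA m + 2 * vB m) * r * qf r ^ 3 + (3 / 2 * vB m) * r ^ 3 * qf r ^ 4

lemma hu {m r : ℝ} (h : (1 - r ^ 2 / 4) ≠ 0) :
    HasDerivAt (fun r => m * qf r) (u1 m r) r := by
  have := (hq h).const_mul m
  refine this.congr_deriv ?_
  unfold u1; ring

lemma hu1 {m r : ℝ} (h : (1 - r ^ 2 / 4) ≠ 0) :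
    HasDerivAt (u1 m) (u2 m r) r := by
  have := ((hasDerivAt_id r).const_mul (m / 2)).mul ((hq h).pow 2)
  refine this.congr_deriv ?_
  unfold u2; simp only [id_eq, Pi.pow_apply]; push_cast; ring

lemma hv {m r : ℝ} (h : (1 - r ^ 2 / 4) ≠ 0) :
    HasDerivAt (vf m) (v1 m r) r := by
  have := (((hq h).pow 2).const_mul (vA m)).add
    (((hasDerivAt_pow 2 r).const_mul (vB m)).mul ((hq h).pow 3))
  refine this.congr_deriv ?_
  unfold v1; simp only [Pi.pow_apply]; push_cast; ring

lemma hv1zero (m : ℝ) : HasDerivAt (v1 m) (vA m + 2 * vB m) 0 := by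
  have h0 : (1 - (0:ℝ) ^ 2 / 4) ≠ 0 := by norm_num
  have := (((hasDerivAt_id (0:ℝ)).const_mul (vA m + 2 * vB m)).mul ((hq h0).pow 3)).add
    (((hasDerivAt_pow 3 (0:ℝ)).const_mul (3 / 2 * vB m)).mul ((hq h0).pow 4))
  refine this.congr_deriv ?_
  simp [qf]

lemma Lop_u_eq {m r : ℝ} (hr : r ∈ Set.Ioo (-2:ℝ) 2) :
    Lop m (fun r => m * qf r) r = vf m r := by
  have h := ht hr
  have hd1 : ∀ x ∈ Set.Ioo (-2:ℝ) 2, deriv (fun r => m * qf r) x = u1 m x :=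
    fun x hx => (hu (ht hx)).deriv
  have hd2 : deriv (deriv (fun r => m * qf r)) r = u2 m r := by
    have hev : deriv (fun r => m * qf r) =ᶠ[nhds r] u1 m :=
      Filter.eventuallyEq_of_mem (isOpen_Ioo.mem_nhds hr) hd1
    rw [hev.deriv_eq, (hu1 h).deriv]
  simp only [Lop, hd2, hd1 r hr]
  simp only [u1, u2, vf, vA, vB, qf]
  field_simp
  ring

theorem Lop_sq_u_at_zero (m : ℝ) :
    Lop m (Lop m (fun r => m * (1 - r ^ 2 / 4)⁻¹)) 0
      = (1 / 4) * (m * (m - 1) * (4 * m ^ 3 - 5 * m - 6)) := by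
  have h0 : (0:ℝ) ∈ Set.Ioo (-2:ℝ) 2 := by norm_num
  show Lop m (Lop m (fun r => m * qf r)) 0 = _
  have hd1 : ∀ x ∈ Set.Ioo (-2:ℝ) 2, deriv (Lop m (fun r => m * qf r)) x = v1 m x := by
    intro x hx
    have hev : Lop m (fun r => m * qf r) =ᶠ[nhds x] vf m :=
      Filter.eventuallyEq_of_mem (isOpen_Ioo.mem_nhds hx) fun y hy => Lop_u_eq hy
    rw [hev.deriv_eq, (hv (ht hx)).deriv]
  have hd2 : deriv (deriv (Lop m (fun r => m * qf r))) 0 = vA m + 2 * vB m := by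
    have hev : deriv (Lop m (fun r => m * qf r)) =ᶠ[nhds 0] v1 m :=
      Filter.eventuallyEq_of_mem (isOpen_Ioo.mem_nhds h0) hd1
    rw [hev.deriv_eq, (hv1zero m).deriv]
  have hval : Lop m (fun r => m * qf r) 0 = vA m := by
    rw [Lop_u_eq h0]; simp [vf, qf]
  have heq : Lop m (Lop m (fun r => m * qf r)) 0
      = deriv (deriv (Lop m (fun r => m * qf r))) 0
        - m * 0 * (1 - 0 ^ 2 / 4)⁻¹ * deriv (Lop m (fun r => m * qf r)) 0
        - m * (m - 1 / 2) * (1 - (0:ℝ) ^ 2 / 4)⁻¹ * (Lop m (fun r => m * qf r) 0) := rfl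
  rw [heq, hd2, hval]
  unfold vA vB
  norm_num
  ring
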